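/- Proportional allocation is feasible: fix a link l with capacity c^l > 0, groups k ∈ K^l, positive weights α_{ki}^l > 0, and nonnegative demands y_{ki} ≥ 0. Define n_k^l = max_{i ∈ G_k^l} α_{ki}^l y_{ki}, let r^l = c^l / Σ_{k∈K^l} n_k^l when at least two groups have positive n_k^l, r^l = c^l/Σ n_k^l - c^l/(n_k^l(n_k^l+1)) when exactly one group k has n_k^l > 0, and r^l = +∞ otherwise; set r = min over links of r^l, x_{ki} = r·y_{ki}, m_k^l = r·n_k^l. Then for every link l: Σ_{k∈K^l} m_k^l ≤ c^l and α_{ki}^l x_{ki} ≤ m_k^l for all i ∈ G_k^l. -/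

import Mathlib

open scoped ENNReal

/-- Feasibility of the (modified) proportional allocation rule: given nonnegative
demands `y`, positive weights `α` and capacities `c`, with `n k l` the weighted group
maximum, `r^l = c^l/Σₖ n_k^l` when at least two groups have a positive maximum at `l`,
`r^l = c^l/Σₖ n_k^l - c^l/(Σₖ n_k^l·(Σₖ n_k^l + 1))` when exactly one group does
(so that `Σₖ n_k^l` is that group's maximum), and `r^l = ∞` otherwise, and with
`r = minₗ r^l`, `x_{ki} = r·y_{ki}`, `m_k^l = r·n_k^l`, the allocation satisfies
`Σₖ m_k^l ≤ c^l` and `α_{ki}^l x_{ki} ≤ m_k^l` for every link `l`. -/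
theorem stmt4 (L K N : Type) [Fintype L] [Fintype K] [Fintype N] [DecidableEq K]
    (grp : N → K) (uses : N → L → Prop) [∀ i l, Decidable (uses i l)]
    (α : N → L → ℝ≥0∞) (hα : ∀ i l, 0 < α i l ∧ α i l ≠ ⊤)
    (y : N → ℝ≥0∞) (hy : ∀ i, y i ≠ ⊤)
    (c : L → ℝ≥0∞) (hc : ∀ l, 0 < c l ∧ c l ≠ ⊤)
    (n : K → L → ℝ≥0∞)
    (hn : ∀ k l, n k l =
      (Finset.univ.filter (fun i : N => grp i = k ∧ uses i l)).sup
        (fun i => α i l * y i))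
    (S : L → Finset K)
    (hS : ∀ l, S l = Finset.univ.filter (fun k : K => 0 < n k l))
    (rl : L → ℝ≥0∞)
    (hrl : ∀ l, rl l =
      if 2 ≤ (S l).card then c l / (∑ k : K, n k l)
      else if (S l).card = 1 then
        c l / (∑ k : K, n k l)
          - c l / ((∑ k : K, n k l) * ((∑ k : K, n k l) + 1))
      else ⊤)
    (r : ℝ≥0∞) (hr : r = ⨅ l : L, rl l)
    (x : N → ℝ≥0∞) (hx : ∀ i, x i = r * y i)
    (m : K → L → ℝ≥0∞) (hm : ∀ k l, m k l = r * n k l) :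
    (∀ l : L, ∑ k : K, m k l ≤ c l) ∧
    (∀ (i : N) (l : L), uses i l → α i l * x i ≤ m (grp i) l) := by
  constructor
  · intro l
    have hsum : ∑ k : K, m k l = r * ∑ k : K, n k l := by
      simp [hm, Finset.mul_sum]
    set T := ∑ k : K, n k l with hT
    by_cases hT0 : T = 0
    · rw [hsum, hT0, mul_zero]; exact zero_le
    · have hTtop : T ≠ ⊤ := by
        rw [hT]
        refine (ENNReal.sum_lt_top.2 ?_).ne
        intro k _
        rw [hn]
        refine (Finset.sup_lt_iff (by simp)).2 ?_
        intro i _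
        exact ENNReal.mul_lt_top (hα i l).2.lt_top (hy i).lt_top
      -- some group has positive n, so S l is nonempty
      have hcard : 1 ≤ (S l).card := by
        obtain ⟨k, hk⟩ : ∃ k, n k l ≠ 0 := by
          by_contra h
          push_neg at h
          exact hT0 (by simpa [h] using hT)
        have : k ∈ S l := by
          rw [hS]; simp [pos_iff_ne_zero, hk]
        exact Finset.card_pos.2 ⟨k, this⟩
      have hrl_le : rl l ≤ c l / T := by
        rw [hrl]
        rcases le_or_gt 2 (S l).card with h2 | h2
        · simp [h2, hT]
        · have h1 : (S l).card = 1 := le_antisymm (by omega) hcard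
          simp only [h1, if_neg (by omega : ¬ 2 ≤ (1:ℕ)), if_pos rfl]
          exact tsub_le_self
      have hr_le : r ≤ c l / T := le_trans (hr ▸ iInf_le rl l) hrl_le
      calc ∑ k : K, m k l = r * T := hsum
        _ ≤ (c l / T) * T := by gcongr
        _ = c l := by
            rw [ENNReal.div_mul_cancel hT0 hTtop]
  · intro i l hil
    have hmem : i ∈ Finset.univ.filter (fun j : N => grp j = grp i ∧ uses j l) := by
      simp [hil]
    have hle : α i l * y i ≤ n (grp i) l := by
      rw [hn]
      exact Finset.le_sup (f := fun j => α j l * y j) hmem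
    calc α i l * x i = r * (α i l * y i) := by rw [hx]; ring
      _ ≤ r * n (grp i) l := by gcongr
      _ = m (grp i) l := (hm _ _).symm
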